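/- arXiv:1404.1980 — 2 statements merged into one kernel-verified Lean document; each statement's English description precedes it below -/
import Mathlib

section
/- tr(X^{2r}) = 0 in R for every integer r ≥ 1, where tr denotes the trace of a matrix with entries in R (the sum of the diagonal entries of the matrix power X^{2r}). -/
open ExteriorAlgebra Matrix

/-- The generic matrix `X` whose `(i,j)` entry is the image under `ι` of the
standard basis matrix `E_{ij}` in the exterior algebra on `Mat_n(ℂ)`. -/
noncomputable def genericX (n : ℕ) :
    Matrix (Fin n) (Fin n) (ExteriorAlgebra ℂ (Matrix (Fin n) (Fin n) ℂ)) :=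
  fun i j => ExteriorAlgebra.ι ℂ (Matrix.single i j (1 : ℂ))

lemma genericX_parity (n k : ℕ) (i j : Fin n)
    (v : Matrix (Fin n) (Fin n) ℂ) :
    ((genericX n) ^ k) i j * ExteriorAlgebra.ι ℂ v =
      ((-1 : ℂ) ^ k) • (ExteriorAlgebra.ι ℂ v * ((genericX n) ^ k) i j) := by
  induction k generalizing i j with
  | zero =>
    simp only [pow_zero, Matrix.one_apply, one_smul]
    split <;> simp
  | succ k ih =>
    rw [pow_succ, Matrix.mul_apply, Finset.sum_mul, Finset.mul_sum,
      Finset.smul_sum]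
    refine Finset.sum_congr rfl fun l _ => ?_
    have hanti : genericX n l j * ExteriorAlgebra.ι ℂ v =
        -(ExteriorAlgebra.ι ℂ v * genericX n l j) := by
      exact eq_neg_of_add_eq_zero_left
        (ExteriorAlgebra.ι_add_mul_swap (Matrix.single l j (1 : ℂ)) v)
    calc ((genericX n) ^ k) i l * genericX n l j * ExteriorAlgebra.ι ℂ v
        = ((genericX n) ^ k) i l * (genericX n l j * ExteriorAlgebra.ι ℂ v) := by
          rw [mul_assoc]
      _ = -((((genericX n) ^ k) i l * ExteriorAlgebra.ι ℂ v) * genericX n l j) := by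
          rw [hanti, mul_neg, ← mul_assoc]
      _ = -((((-1 : ℂ) ^ k) • (ExteriorAlgebra.ι ℂ v * ((genericX n) ^ k) i l))
            * genericX n l j) := by rw [ih]
      _ = ((-1 : ℂ) ^ (k + 1)) •
            (ExteriorAlgebra.ι ℂ v * (((genericX n) ^ k) i l * genericX n l j)) := by
          rw [pow_succ]
          simp [smul_mul_assoc, mul_assoc, mul_neg_one, neg_smul]

theorem trace_pow_even_eq_zero (n : ℕ) (hn : 0 < n) (r : ℕ) (hr : 1 ≤ r) :
    Matrix.trace ((genericX n) ^ (2 * r)) = 0 := by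
  obtain ⟨m, rfl⟩ : ∃ m, r = m + 1 := ⟨r - 1, by omega⟩
  set k := 2 * (m + 1) - 1 with hk
  have h2 : 2 * (m + 1) = k + 1 := by omega
  have hodd : (-1 : ℂ) ^ k = -1 := by
    have : Odd k := ⟨m, by omega⟩
    exact this.neg_one_pow
  set X := genericX n
  have h1 : Matrix.trace (X ^ (2 * (m + 1))) =
      ∑ i, ∑ j, (X ^ k) i j * X j i := by
    rw [h2, pow_succ, Matrix.trace]
    simp [Matrix.diag, Matrix.mul_apply]
  have h2' : Matrix.trace (X ^ (2 * (m + 1))) =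
      ∑ i, ∑ j, X i j * (X ^ k) j i := by
    rw [h2, pow_succ', Matrix.trace]
    simp [Matrix.diag, Matrix.mul_apply]
  have key : Matrix.trace (X ^ (2 * (m + 1))) =
      -Matrix.trace (X ^ (2 * (m + 1))) := by
    calc Matrix.trace (X ^ (2 * (m + 1)))
        = ∑ i, ∑ j, (X ^ k) i j * X j i := h1
      _ = ∑ i, ∑ j, -(X j i * (X ^ k) i j) := by
          refine Finset.sum_congr rfl fun i _ => Finset.sum_congr rfl fun j _ => ?_
          have := genericX_parity n k i j (Matrix.single j i (1 : ℂ))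
          rw [hodd] at this
          have hXji : X j i = ExteriorAlgebra.ι ℂ (Matrix.single j i (1 : ℂ)) := rfl
          rw [hXji, this]
          simp
          rfl
      _ = -∑ j, ∑ i, X j i * (X ^ k) i j := by
          rw [Finset.sum_comm]
          simp [Finset.sum_neg_distrib]
      _ = -Matrix.trace (X ^ (2 * (m + 1))) := by rw [h2']
  have : (2 : ℂ) • Matrix.trace (X ^ (2 * (m + 1))) = 0 := by
    rw [two_smul]
    nth_rewrite 1 [key]
    simp
  rcases smul_eq_zero.mp this with h | h
  · norm_num at h
  · exact h
end

section
/- For every integer l ≥ 1 with l ≢ 3 (mod 4), we have tr(A^l) = 0 in R, where tr denotes the trace of a matrix with entries in R. -/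
open ExteriorAlgebra Matrix

set_option synthInstance.maxHeartbeats 1000000
set_option maxHeartbeats 1000000

/-- The subspace of alternating (skew-symmetric) complex `n × n` matrices. -/
noncomputable def altSubmodule (n : ℕ) : Submodule ℂ (Matrix (Fin n) (Fin n) ℂ) where
  carrier := {M | Mᵀ = -M}
  add_mem' := by
    intro a b ha hb
    simp only [Set.mem_setOf_eq] at *
    rw [Matrix.transpose_add, ha, hb, neg_add]
  zero_mem' := by simp
  smul_mem' := by
    intro c M hM
    simp only [Set.mem_setOf_eq] at *
    simp [Matrix.transpose_smul, hM]

/-- The generic alternating matrix `A`, whose `(i,j)` entry is the image of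
`E_{ij} - E_{ji}` in the exterior algebra on the space of alternating matrices. -/
noncomputable def genericA (n : ℕ) :
    Matrix (Fin n) (Fin n) (ExteriorAlgebra ℂ (altSubmodule n)) :=
  fun i j => ExteriorAlgebra.ι ℂ
    ⟨Matrix.single i j (1 : ℂ) - Matrix.single j i (1 : ℂ), by
      show _ = _
      ext a b
      simp [Matrix.transpose_apply, Matrix.single, and_comm]⟩

section Aux

variable {R : Type*} [CommRing R] {M : Type*} [AddCommGroup M] [Module R M]

theorem aux_iota_swap (x y : M) :
    ExteriorAlgebra.ι R x * ExteriorAlgebra.ι R y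
      = -(ExteriorAlgebra.ι R y * ExteriorAlgebra.ι R x) :=
  eq_neg_of_add_eq_zero_left (ExteriorAlgebra.ι_add_mul_swap x y)

theorem aux_iota_mul_odd (x : M) {z : ExteriorAlgebra R M}
    (hz : z ∈ CliffordAlgebra.evenOdd (0 : QuadraticForm R M) 1) :
    ExteriorAlgebra.ι R x * z = -(z * ExteriorAlgebra.ι R x) := by
  induction z, hz using CliffordAlgebra.odd_induction with
  | ι v => exact aux_iota_swap x v
  | add a b ha hb iha ihb => rw [mul_add, iha, ihb, add_mul, neg_add]
  | ι_mul_ι_mul m₁ m₂ z hz ih =>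
    calc ExteriorAlgebra.ι R x * (CliffordAlgebra.ι 0 m₁ * CliffordAlgebra.ι 0 m₂ * z)
        = ((ExteriorAlgebra.ι R x * ExteriorAlgebra.ι R m₁) * ExteriorAlgebra.ι R m₂) * z := by
          noncomm_ring
      _ = ((-(ExteriorAlgebra.ι R m₁ * ExteriorAlgebra.ι R x)) * ExteriorAlgebra.ι R m₂) * z := by
          rw [aux_iota_swap]
      _ = -(ExteriorAlgebra.ι R m₁ * ((ExteriorAlgebra.ι R x * ExteriorAlgebra.ι R m₂) * z)) := by
          noncomm_ring
      _ = -(ExteriorAlgebra.ι R m₁ * ((-(ExteriorAlgebra.ι R m₂ * ExteriorAlgebra.ι R x)) * z)) := by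
          rw [aux_iota_swap x m₂]
      _ = ExteriorAlgebra.ι R m₁ * ExteriorAlgebra.ι R m₂ * (ExteriorAlgebra.ι R x * z) := by
          noncomm_ring
      _ = ExteriorAlgebra.ι R m₁ * ExteriorAlgebra.ι R m₂ * (-(z * ExteriorAlgebra.ι R x)) := by
          rw [ih]
      _ = -(CliffordAlgebra.ι 0 m₁ * CliffordAlgebra.ι 0 m₂ * z * ExteriorAlgebra.ι R x) := by
          noncomm_ring

theorem aux_odd_mul_odd {y z : ExteriorAlgebra R M}
    (hy : y ∈ CliffordAlgebra.evenOdd (0 : QuadraticForm R M) 1)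
    (hz : z ∈ CliffordAlgebra.evenOdd (0 : QuadraticForm R M) 1) :
    y * z = -(z * y) := by
  induction y, hy using CliffordAlgebra.odd_induction with
  | ι v => exact aux_iota_mul_odd v hz
  | add a b ha hb iha ihb => rw [add_mul, iha, ihb, mul_add, neg_add]
  | ι_mul_ι_mul m₁ m₂ y hy ih =>
    calc CliffordAlgebra.ι 0 m₁ * CliffordAlgebra.ι 0 m₂ * y * z
        = ExteriorAlgebra.ι R m₁ * (ExteriorAlgebra.ι R m₂ * (y * z)) := by noncomm_ring
      _ = ExteriorAlgebra.ι R m₁ * (ExteriorAlgebra.ι R m₂ * (-(z * y))) := by rw [ih]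
      _ = -(ExteriorAlgebra.ι R m₁ * ((ExteriorAlgebra.ι R m₂ * z) * y)) := by noncomm_ring
      _ = -(ExteriorAlgebra.ι R m₁ * ((-(z * ExteriorAlgebra.ι R m₂)) * y)) := by
          rw [aux_iota_mul_odd m₂ hz]
      _ = (ExteriorAlgebra.ι R m₁ * z) * (ExteriorAlgebra.ι R m₂ * y) := by noncomm_ring
      _ = (-(z * ExteriorAlgebra.ι R m₁)) * (ExteriorAlgebra.ι R m₂ * y) := by
          rw [aux_iota_mul_odd m₁ hz]
      _ = -(z * (CliffordAlgebra.ι 0 m₁ * CliffordAlgebra.ι 0 m₂ * y)) := by noncomm_ring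

theorem aux_mul_iota_pow {k : ℕ} {z : ExteriorAlgebra R M}
    (hz : z ∈ (LinearMap.range (ExteriorAlgebra.ι R : M →ₗ[R] ExteriorAlgebra R M)) ^ k)
    (x : M) :
    z * ExteriorAlgebra.ι R x = ((-1 : ℤ) ^ k) • (ExteriorAlgebra.ι R x * z) := by
  induction hz using Submodule.pow_induction_on_left' with
  | algebraMap r =>
    rw [pow_zero, one_smul, Algebra.commutes]
  | add a b i ha hb iha ihb => rw [add_mul, iha, ihb, mul_add, smul_add]
  | mem_mul m hm i z hz ih =>
    obtain ⟨v, rfl⟩ := hm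
    calc (ExteriorAlgebra.ι R v * z) * ExteriorAlgebra.ι R x
        = ExteriorAlgebra.ι R v * (z * ExteriorAlgebra.ι R x) := mul_assoc _ _ _
      _ = ExteriorAlgebra.ι R v * (((-1 : ℤ) ^ i) • (ExteriorAlgebra.ι R x * z)) := by rw [ih]
      _ = ((-1 : ℤ) ^ i) • ((ExteriorAlgebra.ι R v * ExteriorAlgebra.ι R x) * z) := by
          rw [mul_smul_comm, mul_assoc]
      _ = ((-1 : ℤ) ^ i) • ((-(ExteriorAlgebra.ι R x * ExteriorAlgebra.ι R v)) * z) := by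
          rw [aux_iota_swap]
      _ = ((-1 : ℤ) ^ (i + 1)) • (ExteriorAlgebra.ι R x * (ExteriorAlgebra.ι R v * z)) := by
          rw [pow_succ, mul_neg_one, neg_smul, neg_mul, smul_neg, mul_assoc]

/-- The sign `(-1)^(k*(k-1)/2)`, defined recursively. -/
def trisign : ℕ → ℤ
  | 0 => 1
  | (k + 1) => (-1) ^ k * trisign k

theorem trisign_add_four (m : ℕ) : trisign (m + 4) = trisign m := by
  show (-1 : ℤ) ^ (m + 3) * ((-1) ^ (m + 2) * ((-1) ^ (m + 1) * ((-1) ^ m * trisign m)))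
      = trisign m
  rw [pow_succ, pow_succ, pow_succ]
  ring_nf
  rw [show m * 4 = 2 * (m * 2) from by ring, pow_mul]
  norm_num

theorem trisign_of_mod4 (l : ℕ) (h : l % 4 = 1) : trisign l = 1 := by
  have key : ∀ q, trisign (4 * q + 1) = 1 := by
    intro q
    induction q with
    | zero => rfl
    | succ q ih =>
      rw [show 4 * (q + 1) + 1 = (4 * q + 1) + 4 from by ring, trisign_add_four]
      exact ih
  obtain ⟨q, rfl⟩ : ∃ q, l = 4 * q + 1 := ⟨l / 4, by omega⟩
  exact key q

theorem aux_reverse_pow {k : ℕ} {z : ExteriorAlgebra R M}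
    (hz : z ∈ (LinearMap.range (ExteriorAlgebra.ι R : M →ₗ[R] ExteriorAlgebra R M)) ^ k) :
    CliffordAlgebra.reverse (Q := (0 : QuadraticForm R M)) z = trisign k • z := by
  induction hz using Submodule.pow_induction_on_left' with
  | algebraMap r =>
    rw [CliffordAlgebra.reverse.commutes]
    exact (one_smul ℤ _).symm
  | add a b i ha hb iha ihb => rw [map_add, iha, ihb, smul_add]
  | mem_mul m hm i z hz ih =>
    obtain ⟨v, rfl⟩ := hm
    calc CliffordAlgebra.reverse (ExteriorAlgebra.ι R v * z)
        = CliffordAlgebra.reverse z * ExteriorAlgebra.ι R v := by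
          rw [CliffordAlgebra.reverse.map_mul, CliffordAlgebra.reverse_ι]
      _ = (trisign i • z) * ExteriorAlgebra.ι R v := by rw [ih]
      _ = trisign i • (z * ExteriorAlgebra.ι R v) := smul_mul_assoc _ _ _
      _ = trisign i • (((-1 : ℤ) ^ i) • (ExteriorAlgebra.ι R v * z)) := by
          rw [aux_mul_iota_pow hz]
      _ = trisign (i + 1) • (ExteriorAlgebra.ι R v * z) := by
          rw [smul_smul]
          congr 1
          show trisign i * (-1) ^ i = (-1) ^ i * trisign i
          ring

end Aux

section GenericA

variable (n : ℕ)

theorem genericA_neg (i j : Fin n) : genericA n j i = -genericA n i j := by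
  show ExteriorAlgebra.ι ℂ _ = -ExteriorAlgebra.ι ℂ _
  rw [← map_neg]
  congr 1
  exact Subtype.ext (neg_sub _ _).symm

theorem genericA_pow_mem_evenOdd (k : ℕ) :
    ∀ i j : Fin n, ((genericA n) ^ k) i j
      ∈ CliffordAlgebra.evenOdd (0 : QuadraticForm ℂ (altSubmodule n)) (k : ZMod 2) := by
  induction k with
  | zero =>
    intro i j
    rw [pow_zero]
    rw [Matrix.one_apply]
    split_ifs
    · simpa using SetLike.one_mem_graded _
    · exact zero_mem _
  | succ k ih =>
    intro i j
    rw [pow_succ, Matrix.mul_apply]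
    have hc : ((k + 1 : ℕ) : ZMod 2) = (k : ZMod 2) + 1 := by push_cast; ring
    rw [hc]
    refine Submodule.sum_mem _ fun c _ => ?_
    exact SetLike.mul_mem_graded (ih i c) (CliffordAlgebra.ι_mem_evenOdd_one _ _)

theorem genericA_pow_mem_pow (k : ℕ) :
    ∀ i j : Fin n, ((genericA n) ^ k) i j
      ∈ (LinearMap.range (ExteriorAlgebra.ι ℂ :
          (altSubmodule n) →ₗ[ℂ] ExteriorAlgebra ℂ (altSubmodule n))) ^ k := by
  induction k with
  | zero =>
    intro i j
    rw [pow_zero, pow_zero, Matrix.one_apply]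
    split_ifs
    · exact Submodule.mem_one.mpr ⟨1, map_one _⟩
    · exact zero_mem _
  | succ k ih =>
    intro i j
    rw [pow_succ, pow_succ, Matrix.mul_apply]
    refine Submodule.sum_mem _ fun c _ => ?_
    exact Submodule.mul_mem_mul (ih i c) ⟨_, rfl⟩

end GenericA

theorem trace_genericA_pow_eq_zero (n : ℕ) (hn : 0 < n) (l : ℕ) (hl : 1 ≤ l)
    (hl4 : l % 4 ≠ 3) :
    Matrix.trace ((genericA n) ^ l) = 0 := by
  set A := genericA n with hA
  set t := Matrix.trace (A ^ l) with ht
  have key : t = -t → t = 0 := by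
    intro h
    have h2 : (2 : ℂ) • t = 0 := by
      rw [two_smul]
      exact add_eq_zero_iff_eq_neg.mpr h
    rcases smul_eq_zero.mp h2 with h' | h'
    · exact absurd h' two_ne_zero
    · exact h'
  rcases Nat.even_or_odd l with hle | hlo
  · -- l even: use supercommutativity of the trace
    obtain ⟨m, rfl⟩ : ∃ m, l = m + 1 := ⟨l - 1, by omega⟩
    have hmodd : (m : ZMod 2) = 1 := by
      obtain ⟨c, rfl⟩ : ∃ c, m = 2 * c + 1 := by
        rcases Nat.even_or_odd m with hm | hm
        · exfalso; exact (Nat.even_add_one.mp hle) hm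
        · exact hm
      push_cast
      rw [show ((2 : ZMod 2)) = 0 from rfl]
      ring
    refine key ?_
    have h1 : t = ∑ i, ∑ j, A i j * (A ^ m) j i := by
      rw [ht, pow_succ', Matrix.trace]
      simp [Matrix.mul_apply, Matrix.diag]
    have h2 : t = ∑ i, ∑ j, (A ^ m) i j * A j i := by
      rw [ht, pow_succ, Matrix.trace]
      simp [Matrix.mul_apply, Matrix.diag]
    calc t = ∑ i, ∑ j, A i j * (A ^ m) j i := h1
      _ = ∑ i, ∑ j, -((A ^ m) j i * A i j) := by
          refine Finset.sum_congr rfl fun i _ => Finset.sum_congr rfl fun j _ => ?_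
          refine aux_odd_mul_odd ?_ ?_
          · exact CliffordAlgebra.ι_mem_evenOdd_one _ _
          · have := genericA_pow_mem_evenOdd n m j i
            rwa [hmodd] at this
      _ = -(∑ i, ∑ j, (A ^ m) j i * A i j) := by
          simp [Finset.sum_neg_distrib]
      _ = -(∑ j, ∑ i, (A ^ m) j i * A i j) := by rw [Finset.sum_comm]
      _ = -t := by rw [h2]
  · -- l odd with l % 4 = 1 : use reverse
    have hl1 : l % 4 = 1 := by
      have := Nat.odd_iff.mp hlo
      omega
    refine key ?_
    -- the reversal map applied entrywise, composed with transposition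
    set rev : ExteriorAlgebra ℂ (altSubmodule n) → ExteriorAlgebra ℂ (altSubmodule n) :=
      fun x => CliffordAlgebra.reverse (Q := (0 : QuadraticForm ℂ (altSubmodule n))) x with hrev
    have revt : rev t = t := by
      have := aux_reverse_pow (R := ℂ) (M := altSubmodule n)
        (k := l) (z := t) ?_
      · rw [hrev]
        show CliffordAlgebra.reverse t = t
        rw [this, trisign_of_mod4 l hl1, one_smul]
      · rw [ht, Matrix.trace]
        exact Submodule.sum_mem _ fun i _ => genericA_pow_mem_pow n l i i
    set F : Matrix (Fin n) (Fin n) (ExteriorAlgebra ℂ (altSubmodule n)) →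
        Matrix (Fin n) (Fin n) (ExteriorAlgebra ℂ (altSubmodule n)) :=
      fun M => (M.map rev)ᵀ with hF
    have hFmul : ∀ M N, F (M * N) = F N * F M := by
      intro M N
      ext i j
      simp only [hF, Matrix.transpose_apply, Matrix.map_apply, Matrix.mul_apply, hrev]
      rw [map_sum]
      refine Finset.sum_congr rfl fun c _ => ?_
      exact CliffordAlgebra.reverse.map_mul _ _
    have hFA : F A = -A := by
      ext i j
      simp only [hF, Matrix.transpose_apply, Matrix.map_apply, Matrix.neg_apply, hrev]
      rw [show A j i = -A i j from genericA_neg n i j, map_neg]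
      congr 1
      exact CliffordAlgebra.reverse_ι _
    have hFpow : ∀ k : ℕ, 1 ≤ k → F (A ^ k) = (F A) ^ k := by
      intro k hk
      induction k with
      | zero => omega
      | succ k ih =>
        rcases Nat.eq_zero_or_pos k with rfl | hkpos
        · simp
        · rw [pow_succ, hFmul, ih hkpos, pow_succ']
    have htrF : ∀ M, Matrix.trace (F M) = rev (Matrix.trace M) := by
      intro M
      rw [hF]
      simp only [Matrix.trace, Matrix.diag, Matrix.transpose_apply, Matrix.map_apply, hrev]
      rw [map_sum]
    have : rev t = -t := by
      rw [ht, ← htrF, hFpow l hl, hFA, hlo.neg_pow, Matrix.trace_neg]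
    rw [revt] at this
    exact this
end
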